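/- Suppose the No Direct Effect assumption holds: there is a function q̄ : X × E → ℝ with q(x,a,e) = q̄(x,e) for all x ∈ X, a ∈ A, e ∈ E. Then the policy value satisfies V(π) = ∑_{x∈X} p(x) ∑_{e∈E} p(e|x,π) · q̄(x,e). -/
import Mathlib

open Finset

/-- Marginal embedding distribution `p(e|x,π')` of a policy `π'`. -/
noncomputable def pE {X A E : Type*} [Fintype A]
    (π' : X → A → ℝ) (φ : X → A → E → ℝ) (x : X) (e : E) : ℝ :=
  ∑ a, π' x a * φ x a e

/-- Policy value `V(π)`. -/
noncomputable def Vval {X A E : Type*} [Fintype X] [Fintype A] [Fintype E]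
    (p : X → ℝ) (πt : X → A → ℝ) (φ : X → A → E → ℝ) (q : X → A → E → ℝ) : ℝ :=
  ∑ x, ∑ a, ∑ e, p x * πt x a * φ x a e * q x a e

/-- Proposition 1 (identification): under No Direct Effect, the policy value
equals the expectation of `q̄(x,e)` under the marginal embedding distribution. -/
theorem identification_no_direct_effect
    {X A E : Type*} [Fintype X] [Fintype A] [Fintype E]
    (p : X → ℝ) (πt π₀ : X → A → ℝ) (φ : X → A → E → ℝ)
    (q : X → A → E → ℝ) (qbar : X → E → ℝ)
    (hp : ∀ x, 0 ≤ p x) (hp1 : ∑ x, p x = 1)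
    (hπt : ∀ x a, 0 ≤ πt x a) (hπt1 : ∀ x, ∑ a, πt x a = 1)
    (hπ₀ : ∀ x a, 0 ≤ π₀ x a) (hπ₀1 : ∀ x, ∑ a, π₀ x a = 1)
    (hφ : ∀ x a e, 0 ≤ φ x a e) (hφ1 : ∀ x a, ∑ e, φ x a e = 1)
    (hnde : ∀ x a e, q x a e = qbar x e) :
    Vval p πt φ q = ∑ x, p x * ∑ e, pE πt φ x e * qbar x e := by
  unfold Vval pE
  refine Finset.sum_congr rfl fun x _ => ?_
  rw [Finset.mul_sum]
  rw [Finset.sum_comm]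
  refine Finset.sum_congr rfl fun e _ => ?_
  rw [Finset.sum_mul, Finset.mul_sum]
  refine Finset.sum_congr rfl fun a _ => ?_
  rw [hnde]; ring
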